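/- Under the setup of the unnormalized posterior convergence statement — (X, A, m) a probability space, ξ : X → H measurable, (K, d) a compact metric space with finite Borel measure μ_K, T > 0, t ∈ (0, T], 0 < λ₋ ≤ λ₊, Λ : X × [0, T] × K → ℝ measurable with λ₋ ≤ Λ ≤ λ₊ and (s, x) ↦ Λ(ω, s, x) continuous for every ω; observation points (s_1, y_1), …, (s_N, y_N) ∈ (0, t] × K; a sequence of measurable partitions of K with positive-measure cells and mesh D_M → 0; θ_M the cell-averaged intensities; z, z^M the corresponding likelihoods and ρ(A) := ∫ 1_A(ξ) z dm, ρ^M(A) := ∫ 1_A(ξ) z^M dm — define the normalized posterior probability measures η(A) := ρ(A)/ρ(H) and η^M(A) := ρ^M(A)/ρ^M(H) (the denominators are strictly positive since z, z^M are bounded below by a positive constant). Then sup over measurable A ⊆ H of |η^M(A) − η(A)| tends to 0 as M → ∞. -/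

import Mathlib

open MeasureTheory Filter
open scoped BigOperators

/-- Consistency of the normalized (Kushner–Stratonovich) posterior: as the mesh
of the spatial partitions tends to zero, the normalized discretized posteriors
converge to the exact normalized posterior in total variation (uniformly over
measurable sets). -/
theorem kushner_stratonovich_discretization_convergence
    {X : Type*} [MeasurableSpace X] (m : Measure X) [IsProbabilityMeasure m]
    {H : Type*} [MeasurableSpace H] (ξ : X → H) (hξ : Measurable ξ)
    {K : Type*} [MetricSpace K] [CompactSpace K]
    [MeasurableSpace K] [OpensMeasurableSpace K]
    (μK : Measure K) [IsFiniteMeasure μK]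
    (T t : ℝ) (hT : 0 < T) (ht : 0 < t) (htT : t ≤ T)
    (lm lp : ℝ) (hlm : 0 < lm) (hlmp : lm ≤ lp)
    (Λ : X → ℝ → K → ℝ)
    (hmeas : Measurable (fun p : X × ℝ × K => Λ p.1 p.2.1 p.2.2))
    (hlow : ∀ ω s x, lm ≤ Λ ω s x) (hhigh : ∀ ω s x, Λ ω s x ≤ lp)
    (hcont : ∀ ω, Continuous (fun p : ℝ × K => Λ ω p.1 p.2))
    (N : ℕ) (s : Fin N → ℝ) (y : Fin N → K)
    (hs : ∀ j, s j ∈ Set.Ioc (0 : ℝ) t)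
    (nM : ℕ → ℕ) (part : (M : ℕ) → Fin (nM M) → Set K)
    (hpmeas : ∀ M i, MeasurableSet (part M i))
    (hdisj : ∀ M, Pairwise (Function.onFun Disjoint (part M)))
    (hcover : ∀ M, (⋃ i, part M i) = Set.univ)
    (hppos : ∀ M i, 0 < μK (part M i))
    (D : ℕ → ℝ) (hD : ∀ M, 0 ≤ D M)
    (hdiam : ∀ M i, Metric.diam (part M i) ≤ D M)
    (hDlim : Tendsto D atTop (nhds 0))
    (cell : (M : ℕ) → K → Fin (nM M)) (hcell : ∀ M x, x ∈ part M (cell M x))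
    (θ : ℕ → X → ℝ → K → ℝ)
    (hθ : ∀ M ω u x, θ M ω u x =
      (μK (part M (cell M x))).toReal⁻¹ * ∫ w in part M (cell M x), Λ ω u w ∂μK)
    (I : X → ℝ)
    (hI : ∀ ω, I ω = ∫ u in (0 : ℝ)..t, ∫ x, (Λ ω u x - 1) ∂μK)
    (z : X → ℝ) (zM : ℕ → X → ℝ)
    (hz : ∀ ω, z ω = Real.exp ((∑ j, Real.log (Λ ω (s j) (y j))) - I ω))
    (hzM : ∀ M ω, zM M ω = Real.exp ((∑ j, Real.log (θ M ω (s j) (y j))) - I ω))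
    (ρ : Set H → ℝ) (ρM : ℕ → Set H → ℝ)
    (hρ : ∀ A : Set H, ρ A = ∫ ω, Set.indicator A (fun _ => (1 : ℝ)) (ξ ω) * z ω ∂m)
    (hρM : ∀ M, ∀ A : Set H,
      ρM M A = ∫ ω, Set.indicator A (fun _ => (1 : ℝ)) (ξ ω) * zM M ω ∂m)
    (η : Set H → ℝ) (ηM : ℕ → Set H → ℝ)
    (hη : ∀ A : Set H, η A = ρ A / ρ Set.univ)
    (hηM : ∀ M, ∀ A : Set H, ηM M A = ρM M A / ρM M Set.univ) :
    ∀ ε > (0 : ℝ), ∃ M₀ : ℕ, ∀ M ≥ M₀, ∀ A : Set H, MeasurableSet A →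
      |ηM M A - η A| ≤ ε := by
  intro ε hε
  -- basic positivity of cell measures
  have hμfin : ∀ M i, μK (part M i) < ⊤ := fun M i => measure_lt_top μK _
  have hμtR : ∀ M i, 0 < (μK (part M i)).toReal := fun M i =>
    ENNReal.toReal_pos (hppos M i).ne' (measure_ne_top μK _)
  -- continuity in x
  have hΛx : ∀ ω u, Continuous fun x => Λ ω u x := fun ω u =>
    (hcont ω).comp (continuous_const.prodMk continuous_id)
  have hΛpos : ∀ ω u x, 0 < Λ ω u x := fun ω u x => lt_of_lt_of_le hlm (hlow ω u x)
  -- integrability of Λ ω u over K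
  have hΛint : ∀ ω u, Integrable (fun x => Λ ω u x) μK := by
    intro ω u
    refine (integrable_const lp).mono' (hΛx ω u).aestronglyMeasurable ?_
    filter_upwards with x
    rw [Real.norm_eq_abs, abs_of_nonneg (hΛpos ω u x).le]
    exact hhigh ω u x
  -- θ bounds
  have hθlow : ∀ M ω u x, lm ≤ θ M ω u x := by
    intro M ω u x
    rw [hθ]
    have h1 : ∫ _ in part M (cell M x), lm ∂μK ≤ ∫ w in part M (cell M x), Λ ω u w ∂μK :=
      setIntegral_mono_on (integrableOn_const (hμfin M _).ne)
        ((hΛint ω u).integrableOn) (hpmeas M _) (fun w _ => hlow ω u w)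
    rw [setIntegral_const, smul_eq_mul] at h1
    have hμ := hμtR M (cell M x)
    calc lm = (μK (part M (cell M x))).toReal⁻¹ * ((μK (part M (cell M x))).toReal * lm) := by
          field_simp
      _ ≤ _ := mul_le_mul_of_nonneg_left h1 (inv_nonneg.2 hμ.le)
  have hθhigh : ∀ M ω u x, θ M ω u x ≤ lp := by
    intro M ω u x
    rw [hθ]
    have h1 : ∫ w in part M (cell M x), Λ ω u w ∂μK ≤ ∫ _ in part M (cell M x), lp ∂μK :=
      setIntegral_mono_on ((hΛint ω u).integrableOn)
        (integrableOn_const (hμfin M _).ne) (hpmeas M _) (fun w _ => hhigh ω u w)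
    rw [setIntegral_const, smul_eq_mul] at h1
    have hμ := hμtR M (cell M x)
    calc (μK (part M (cell M x))).toReal⁻¹ * ∫ w in part M (cell M x), Λ ω u w ∂μK
        ≤ (μK (part M (cell M x))).toReal⁻¹ * ((μK (part M (cell M x))).toReal * lp) :=
          mul_le_mul_of_nonneg_left h1 (inv_nonneg.2 hμ.le)
      _ = lp := by field_simp
  -- pointwise convergence of θ to Λ at observation points
  have hθtend : ∀ ω j, Tendsto (fun M => θ M ω (s j) (y j)) atTop (nhds (Λ ω (s j) (y j))) := by
    intro ω j
    rw [Metric.tendsto_atTop]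
    intro ε' hε'
    have hu : UniformContinuous fun x => Λ ω (s j) x :=
      CompactSpace.uniformContinuous_of_continuous (hΛx ω (s j))
    obtain ⟨δ, hδ, hδ'⟩ := Metric.uniformContinuous_iff.mp hu (ε' / 2) (by linarith)
    obtain ⟨M₀, hM₀⟩ := (eventually_atTop).mp (hDlim.eventually_lt_const hδ)
    refine ⟨M₀, fun M hM => ?_⟩
    set S := part M (cell M (y j)) with hS
    have hbd : ∀ w ∈ S, ‖Λ ω (s j) w - Λ ω (s j) (y j)‖ ≤ ε' / 2 := by
      intro w hw
      have hwy : dist w (y j) < δ := by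
        have h1 : dist w (y j) ≤ Metric.diam S :=
          Metric.dist_le_diam_of_mem (Bornology.IsBounded.subset
            (isCompact_univ.isBounded) (Set.subset_univ S)) hw (hcell M (y j))
        exact lt_of_le_of_lt (h1.trans (hdiam M _)) (hM₀ M hM)
      have := hδ' hwy
      rw [Real.dist_eq] at this
      simpa [Real.norm_eq_abs] using this.le
    have key : θ M ω (s j) (y j) - Λ ω (s j) (y j)
        = (μK S).toReal⁻¹ * ∫ w in S, (Λ ω (s j) w - Λ ω (s j) (y j)) ∂μK := by
      rw [hθ, integral_sub ((hΛint ω (s j)).integrableOn)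
        (integrableOn_const (hμfin M _).ne), setIntegral_const, smul_eq_mul, measureReal_def, hS]
      have hμ := hμtR M (cell M (y j))
      field_simp
    have hnorm : ‖∫ w in S, (Λ ω (s j) w - Λ ω (s j) (y j)) ∂μK‖ ≤ (ε' / 2) * (μK S).toReal :=
      norm_setIntegral_le_of_norm_le_const (hμfin M _) hbd
    rw [Real.dist_eq, key, abs_mul]
    have hμ := hμtR M (cell M (y j))
    have : |(μK S).toReal⁻¹| * |∫ w in S, (Λ ω (s j) w - Λ ω (s j) (y j)) ∂μK|
        ≤ (μK S).toReal⁻¹ * ((ε' / 2) * (μK S).toReal) := by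
      rw [abs_of_nonneg (inv_nonneg.2 hμ.le)]
      exact mul_le_mul_of_nonneg_left (by simpa [Real.norm_eq_abs] using hnorm)
        (inv_nonneg.2 hμ.le)
    calc |(μK S).toReal⁻¹| * |∫ w in S, (Λ ω (s j) w - Λ ω (s j) (y j)) ∂μK|
        ≤ (μK S).toReal⁻¹ * ((ε' / 2) * (μK S).toReal) := this
      _ = ε' / 2 := by rw [hS]; field_simp
      _ < ε' := by linarith
  -- bound on the logarithms
  set L : ℝ := max |Real.log lm| |Real.log lp| with hL
  have hlogbd : ∀ v : ℝ, lm ≤ v → v ≤ lp → |Real.log v| ≤ L := by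
    intro v h1 h2
    have hv : 0 < v := lt_of_lt_of_le hlm h1
    rw [abs_le]
    constructor
    · have : Real.log lm ≤ Real.log v := Real.log_le_log hlm h1
      have h3 : -|Real.log lm| ≤ Real.log lm := neg_abs_le _
      have h4 : |Real.log lm| ≤ L := le_max_left _ _
      linarith
    · have : Real.log v ≤ Real.log lp := Real.log_le_log hv h2
      have h3 : Real.log lp ≤ |Real.log lp| := le_abs_self _
      have h4 : |Real.log lp| ≤ L := le_max_right _ _
      linarith
  have hL0 : 0 ≤ L := le_trans (abs_nonneg _) (le_max_left _ _)
  -- bound on I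
  set Cin : ℝ := (lp + 1) * (μK Set.univ).toReal with hCin
  have hCin0 : 0 ≤ Cin := mul_nonneg (by linarith) ENNReal.toReal_nonneg
  have hinner : ∀ ω u, ‖∫ x, (Λ ω u x - 1) ∂μK‖ ≤ Cin := by
    intro ω u
    refine norm_integral_le_of_norm_le_const ?_
    filter_upwards with x
    rw [Real.norm_eq_abs, abs_le]
    have := hlow ω u x
    have := hhigh ω u x
    constructor <;> linarith
  set Ibd : ℝ := Cin * t with hIbd
  have hIbd0 : 0 ≤ Ibd := mul_nonneg hCin0 ht.le
  have hIbound : ∀ ω, |I ω| ≤ Ibd := by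
    intro ω
    rw [hI]
    have := intervalIntegral.norm_integral_le_of_norm_le_const
      (a := (0:ℝ)) (b := t) (C := Cin) (f := fun u => ∫ x, (Λ ω u x - 1) ∂μK)
      (fun u _ => hinner ω u)
    rw [Real.norm_eq_abs] at this
    calc |∫ u in (0:ℝ)..t, ∫ x, (Λ ω u x - 1) ∂μK| ≤ Cin * |t - 0| := this
      _ = Ibd := by rw [hIbd, sub_zero, abs_of_pos ht]
  -- bounds on z and zM
  set E : ℝ := (N : ℝ) * L + Ibd with hE
  have hE0 : 0 ≤ E := add_nonneg (mul_nonneg (Nat.cast_nonneg N) hL0) hIbd0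
  set cz : ℝ := Real.exp (-E) with hcz
  set Bz : ℝ := Real.exp E with hBz
  have hcz0 : 0 < cz := Real.exp_pos _
  have hsumbd : ∀ (f : Fin N → ℝ), (∀ j, lm ≤ f j) → (∀ j, f j ≤ lp) →
      |∑ j, Real.log (f j)| ≤ (N : ℝ) * L := by
    intro f h1 h2
    calc |∑ j, Real.log (f j)| ≤ ∑ j, |Real.log (f j)| := Finset.abs_sum_le_sum_abs _ _
      _ ≤ ∑ _j : Fin N, L := Finset.sum_le_sum fun j _ => hlogbd _ (h1 j) (h2 j)
      _ = (N : ℝ) * L := by simp [mul_comm]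
  have hexpbd : ∀ (S' : ℝ) (ω : X), |S'| ≤ (N : ℝ) * L →
      cz ≤ Real.exp (S' - I ω) ∧ Real.exp (S' - I ω) ≤ Bz := by
    intro S' ω hS'
    have hIb := hIbound ω
    rw [abs_le] at hS' hIb
    constructor
    · exact Real.exp_le_exp.2 (by simp only [hE]; linarith)
    · exact Real.exp_le_exp.2 (by simp only [hE]; linarith)
  have hzbd : ∀ ω, cz ≤ z ω ∧ z ω ≤ Bz := by
    intro ω
    rw [hz]
    exact hexpbd _ ω (hsumbd _ (fun j => hlow ω _ _) (fun j => hhigh ω _ _))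
  have hzMbd : ∀ M ω, cz ≤ zM M ω ∧ zM M ω ≤ Bz := by
    intro M ω
    rw [hzM]
    exact hexpbd _ ω (hsumbd _ (fun j => hθlow M ω _ _) (fun j => hθhigh M ω _ _))
  -- measurability of I
  have hFmeas : StronglyMeasurable fun p : X × ℝ => ∫ x, (Λ p.1 p.2 x - 1) ∂μK := by
    exact StronglyMeasurable.integral_prod_right'
      (f := fun q : (X × ℝ) × K => Λ q.1.1 q.1.2 q.2 - 1)
      (((hmeas.comp ((measurable_fst.comp measurable_fst).prodMk
        ((measurable_snd.comp measurable_fst).prodMk measurable_snd))).sub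
        measurable_const).stronglyMeasurable)
  have hImeas : Measurable I := by
    have h1 : Measurable fun ω : X =>
        ∫ u in Set.Ioc (0:ℝ) t, (fun p : X × ℝ => ∫ x, (Λ p.1 p.2 x - 1) ∂μK) (ω, u) := by
      exact (StronglyMeasurable.integral_prod_right'
        (ν := MeasureTheory.volume.restrict (Set.Ioc (0:ℝ) t))
        (f := fun p : X × ℝ => ∫ x, (Λ p.1 p.2 x - 1) ∂μK) hFmeas).measurable
    have h2 : I = fun ω : X =>
        ∫ u in Set.Ioc (0:ℝ) t, (fun p : X × ℝ => ∫ x, (Λ p.1 p.2 x - 1) ∂μK) (ω, u) := by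
      funext ω
      rw [hI, intervalIntegral.integral_of_le ht.le]
    rw [h2]
    exact h1
  -- measurability of z
  have hΛjmeas : ∀ j, Measurable fun ω => Λ ω (s j) (y j) := fun j =>
    hmeas.comp (measurable_id.prodMk (measurable_const : Measurable fun _ : X => (s j, y j)))
  have hzmeas : Measurable z := by
    rw [funext hz]
    exact Real.measurable_exp.comp
      ((Finset.measurable_sum _ fun j _ => Real.measurable_log.comp (hΛjmeas j)).sub hImeas)
  -- measurability of θ and zM
  have hθjmeas : ∀ M (j : Fin N), Measurable fun ω => θ M ω (s j) (y j) := by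
    intro M j
    have h1 : Measurable fun ω => ∫ w in part M (cell M (y j)), Λ ω (s j) w ∂μK := by
      have hm : StronglyMeasurable fun q : X × K => Λ q.1 (s j) q.2 :=
        (hmeas.comp (measurable_fst.prodMk
          (measurable_const.prodMk measurable_snd))).stronglyMeasurable
      exact (StronglyMeasurable.integral_prod_right'
        (ν := μK.restrict (part M (cell M (y j))))
        (f := fun q : X × K => Λ q.1 (s j) q.2) hm).measurable
    simp only [hθ]
    exact measurable_const.mul h1
  have hzMmeas : ∀ M, Measurable (zM M) := by
    intro M
    rw [funext (hzM M)]
    exact Real.measurable_exp.comp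
      ((Finset.measurable_sum _ fun j _ => Real.measurable_log.comp (hθjmeas M j)).sub hImeas)
  -- integrability helper
  have hintb : ∀ (f : X → ℝ) (C : ℝ), Measurable f → (∀ ω, |f ω| ≤ C) → Integrable f m := by
    intro f C hf hC
    exact (integrable_const C).mono' hf.aestronglyMeasurable
      (Eventually.of_forall fun ω => by rw [Real.norm_eq_abs]; exact hC ω)
  have hzabs : ∀ ω, |z ω| ≤ Bz := fun ω => by
    rw [abs_of_nonneg (le_trans hcz0.le (hzbd ω).1)]; exact (hzbd ω).2
  have hzMabs : ∀ M ω, |zM M ω| ≤ Bz := fun M ω => by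
    rw [abs_of_nonneg (le_trans hcz0.le (hzMbd M ω).1)]; exact (hzMbd M ω).2
  have hzint : Integrable z m := hintb z Bz hzmeas hzabs
  have hzMint : ∀ M, Integrable (zM M) m := fun M => hintb (zM M) Bz (hzMmeas M) (hzMabs M)
  -- indicator facts
  have hindmeas : ∀ (A : Set H), MeasurableSet A →
      Measurable fun ω => Set.indicator A (fun _ => (1:ℝ)) (ξ ω) := fun A hA =>
    (measurable_const.indicator hA).comp hξ
  have hind01 : ∀ (A : Set H) (ω : X), 0 ≤ Set.indicator A (fun _ => (1:ℝ)) (ξ ω) ∧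
      Set.indicator A (fun _ => (1:ℝ)) (ξ ω) ≤ 1 := by
    intro A ω
    by_cases h : ξ ω ∈ A <;> simp [Set.indicator_apply, h]
  have hρint : ∀ (A : Set H), MeasurableSet A →
      Integrable (fun ω => Set.indicator A (fun _ => (1:ℝ)) (ξ ω) * z ω) m := by
    intro A hA
    refine hintb _ Bz ((hindmeas A hA).mul hzmeas) fun ω => ?_
    rw [abs_mul]
    calc |Set.indicator A (fun _ => (1:ℝ)) (ξ ω)| * |z ω| ≤ 1 * Bz :=
        mul_le_mul (abs_le.2 ⟨by linarith [(hind01 A ω).1], (hind01 A ω).2⟩) (hzabs ω)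
          (abs_nonneg _) zero_le_one
      _ = Bz := one_mul _
  have hρMint : ∀ M (A : Set H), MeasurableSet A →
      Integrable (fun ω => Set.indicator A (fun _ => (1:ℝ)) (ξ ω) * zM M ω) m := by
    intro M A hA
    refine hintb _ Bz ((hindmeas A hA).mul (hzMmeas M)) fun ω => ?_
    rw [abs_mul]
    calc |Set.indicator A (fun _ => (1:ℝ)) (ξ ω)| * |zM M ω| ≤ 1 * Bz :=
        mul_le_mul (abs_le.2 ⟨by linarith [(hind01 A ω).1], (hind01 A ω).2⟩) (hzMabs M ω)
          (abs_nonneg _) zero_le_one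
      _ = Bz := one_mul _
  -- key TV-type bound
  have hkey : ∀ M (A : Set H), MeasurableSet A →
      |ρM M A - ρ A| ≤ ∫ ω, |zM M ω - z ω| ∂m := by
    intro M A hA
    rw [hρM, hρ, ← integral_sub (hρMint M A hA) (hρint A hA)]
    have habs : |∫ ω, (Set.indicator A (fun _ => (1:ℝ)) (ξ ω) * zM M ω
        - Set.indicator A (fun _ => (1:ℝ)) (ξ ω) * z ω) ∂m|
        ≤ ∫ ω, |Set.indicator A (fun _ => (1:ℝ)) (ξ ω) * zM M ω
        - Set.indicator A (fun _ => (1:ℝ)) (ξ ω) * z ω| ∂m := by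
      simpa [Real.norm_eq_abs] using
        norm_integral_le_integral_norm (μ := m) fun ω =>
          Set.indicator A (fun _ => (1:ℝ)) (ξ ω) * zM M ω
          - Set.indicator A (fun _ => (1:ℝ)) (ξ ω) * z ω
    refine habs.trans (integral_mono (((hρMint M A hA).sub (hρint A hA)).abs)
      (((hzMint M).sub hzint).abs) fun ω => ?_)
    simp only [← mul_sub, abs_mul]
    calc |Set.indicator A (fun _ => (1:ℝ)) (ξ ω)| * |zM M ω - z ω| ≤ 1 * |zM M ω - z ω| :=
        mul_le_mul_of_nonneg_right
          (abs_le.2 ⟨by linarith [(hind01 A ω).1], (hind01 A ω).2⟩) (abs_nonneg _)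
      _ = |zM M ω - z ω| := one_mul _
  -- positivity and monotonicity of ρ and ρM
  have hρuniv : ρ Set.univ = ∫ ω, z ω ∂m := by
    rw [hρ]; simp
  have hρMuniv : ∀ M, ρM M Set.univ = ∫ ω, zM M ω ∂m := by
    intro M; rw [hρM]; simp
  have hρpos : cz ≤ ρ Set.univ := by
    rw [hρuniv]
    calc cz = ∫ _ω, cz ∂m := by simp
      _ ≤ ∫ ω, z ω ∂m := integral_mono (integrable_const cz) hzint fun ω => (hzbd ω).1
  have hρMpos : ∀ M, cz ≤ ρM M Set.univ := by
    intro M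
    rw [hρMuniv]
    calc cz = ∫ _ω, cz ∂m := by simp
      _ ≤ ∫ ω, zM M ω ∂m := integral_mono (integrable_const cz) (hzMint M)
        fun ω => (hzMbd M ω).1
  have hρnonneg : ∀ (A : Set H), MeasurableSet A → 0 ≤ ρ A := by
    intro A hA
    rw [hρ]
    exact integral_nonneg fun ω => mul_nonneg (hind01 A ω).1 (le_trans hcz0.le (hzbd ω).1)
  have hρle : ∀ (A : Set H), MeasurableSet A → ρ A ≤ ρ Set.univ := by
    intro A hA
    rw [hρ, hρuniv]
    refine integral_mono (hρint A hA) hzint fun ω => ?_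
    calc Set.indicator A (fun _ => (1:ℝ)) (ξ ω) * z ω ≤ 1 * z ω :=
        mul_le_mul_of_nonneg_right (hind01 A ω).2 (le_trans hcz0.le (hzbd ω).1)
      _ = z ω := one_mul _
  -- pointwise convergence of zM to z
  have hzlim : ∀ ω, Tendsto (fun M => zM M ω) atTop (nhds (z ω)) := by
    intro ω
    have hsum : Tendsto (fun M => (∑ j, Real.log (θ M ω (s j) (y j))) - I ω) atTop
        (nhds ((∑ j, Real.log (Λ ω (s j) (y j))) - I ω)) := by
      apply Tendsto.sub_const
      apply tendsto_finset_sum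
      intro j _
      exact ((Real.continuousAt_log (ne_of_gt (hΛpos ω (s j) (y j)))).tendsto).comp
        (hθtend ω j)
    have hexp := (Real.continuous_exp.continuousAt
      (x := (∑ j, Real.log (Λ ω (s j) (y j))) - I ω)).tendsto.comp hsum
    rw [hz ω]
    have : (fun M => zM M ω)
        = fun M => Real.exp ((∑ j, Real.log (θ M ω (s j) (y j))) - I ω) := by
      funext M; rw [hzM]
    rw [this]
    exact hexp
  -- dominated convergence: L¹ convergence of zM to z
  have hTV : Tendsto (fun M => ∫ ω, |zM M ω - z ω| ∂m) atTop (nhds 0) := by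
    have h0 : (0:ℝ) = ∫ _ω, (0:ℝ) ∂m := by simp
    rw [h0]
    apply tendsto_integral_of_dominated_convergence (fun _ => 2 * Bz)
    · exact fun M => (((hzMmeas M).sub hzmeas).abs).aestronglyMeasurable
    · exact integrable_const _
    · intro M
      filter_upwards with ω
      rw [Real.norm_eq_abs, abs_abs]
      calc |zM M ω - z ω| ≤ |zM M ω| + |z ω| := abs_sub _ _
        _ ≤ Bz + Bz := add_le_add (hzMabs M ω) (hzabs ω)
        _ = 2 * Bz := by ring
    · filter_upwards with ω
      have := ((hzlim ω).sub_const (z ω)).abs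
      simpa using this
  -- conclude
  have hε' : (0:ℝ) < ε * cz / 2 := by positivity
  obtain ⟨M₀, hM₀⟩ := (eventually_atTop).mp (hTV.eventually_lt_const hε')
  refine ⟨M₀, fun M hM A hA => ?_⟩
  set e := ∫ ω, |zM M ω - z ω| ∂m with he
  have hee : e < ε * cz / 2 := hM₀ M hM
  have h1 : |ρM M A - ρ A| ≤ e := hkey M A hA
  have h2 : |ρM M Set.univ - ρ Set.univ| ≤ e := hkey M Set.univ MeasurableSet.univ
  have hb : (0:ℝ) < ρ Set.univ := lt_of_lt_of_le hcz0 hρpos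
  have hb' : (0:ℝ) < ρM M Set.univ := lt_of_lt_of_le hcz0 (hρMpos M)
  have hid : ηM M A - η A = (ρM M A - ρ A) / ρM M Set.univ
      + (ρ A / ρ Set.univ) * ((ρ Set.univ - ρM M Set.univ) / ρM M Set.univ) := by
    rw [hηM, hη]
    field_simp
    ring
  have hadiv : ρ A / ρ Set.univ ≤ 1 := div_le_one_of_le₀ (hρle A hA) hb.le
  have hadiv0 : 0 ≤ ρ A / ρ Set.univ := div_nonneg (hρnonneg A hA) hb.le
  have hhalf : e / cz ≤ ε / 2 := by
    rw [div_le_div_iff₀ hcz0 (by norm_num : (0:ℝ) < 2)]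
    nlinarith
  have ht1 : |(ρM M A - ρ A) / ρM M Set.univ| ≤ ε / 2 := by
    rw [abs_div, abs_of_pos hb']
    calc |ρM M A - ρ A| / ρM M Set.univ ≤ e / cz := by gcongr; exact hρMpos M
      _ ≤ ε / 2 := hhalf
  have ht2 : |(ρ A / ρ Set.univ) * ((ρ Set.univ - ρM M Set.univ) / ρM M Set.univ)| ≤ ε / 2 := by
    rw [abs_mul, abs_div (ρ Set.univ - ρM M Set.univ) (ρM M Set.univ), abs_of_pos hb']
    have h3 : |ρ Set.univ - ρM M Set.univ| / ρM M Set.univ ≤ e / cz := by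
      gcongr
      · rw [abs_sub_comm]; exact h2
      · exact hρMpos M
    calc |ρ A / ρ Set.univ| * (|ρ Set.univ - ρM M Set.univ| / ρM M Set.univ)
        ≤ 1 * (e / cz) := mul_le_mul (by rwa [abs_of_nonneg hadiv0]) h3
          (div_nonneg (abs_nonneg _) hb'.le) zero_le_one
      _ = e / cz := one_mul _
      _ ≤ ε / 2 := hhalf
  calc |ηM M A - η A| ≤ |(ρM M A - ρ A) / ρM M Set.univ|
        + |(ρ A / ρ Set.univ) * ((ρ Set.univ - ρM M Set.univ) / ρM M Set.univ)| := by
        rw [hid]; exact abs_add_le _ _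
    _ ≤ ε / 2 + ε / 2 := add_le_add ht1 ht2
    _ = ε := by ring
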